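/- Let g be a completely solvable Lie algebra with a closed 2-form Ω taming an integrable complex structure J, and let h = span(X) be a 1-dimensional isotropic ideal. Then the quotient Lie algebra h^⊥/h carries an induced complex structure J̃, defined by J̃(Y + h) = JY + h when JY ∈ h^⊥ (and via the correction Y ↦ Y - (Ω(JY,X)/Ω(JX,X))X otherwise), and the induced 2-form Ω̃ on h^⊥/h is closed and tames J̃. -/

import Mathlib

/-- For a completely solvable Lie algebra with a closed 2-form `Ω` taming an integrable
complex structure `J` and a 1-dimensional isotropic ideal `h = span X`, the quotient
`h^⊥/h` carries an induced complex structure `J̃` (via the correction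
`Y ↦ Y - (Ω(JY,X)/Ω(JX,X)) X`) tamed by the induced closed 2-form `Ω̃`. -/
theorem quotient_has_tamed_complex_structure
    {g : Type*} [LieRing g] [LieAlgebra ℝ g] [Module.Finite ℝ g]
    (hcs : ∀ X : g, ((((LieAlgebra.ad ℝ g X : g →ₗ[ℝ] g).charpoly).map (RingHom.id ℝ)).Splits))
    (Ω : g →ₗ[ℝ] g →ₗ[ℝ] ℝ) (J : g →ₗ[ℝ] g)
    (halt : ∀ x : g, Ω x x = 0)
    (hnondeg : ∀ x : g, (∀ y : g, Ω x y = 0) → x = 0)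
    (hclosed : ∀ x y z : g, Ω ⁅x, y⁆ z + Ω ⁅y, z⁆ x + Ω ⁅z, x⁆ y = 0)
    (hJ : ∀ x : g, J (J x) = -x)
    (hint : ∀ x y : g, ⁅J x, J y⁆ = ⁅x, y⁆ + J ⁅J x, y⁆ + J ⁅x, J y⁆)
    (htame : ∀ x : g, x ≠ 0 → 0 < Ω x (J x))
    (X : g) (hX : X ≠ 0)
    (hideal : ∀ w : g, ∃ t : ℝ, ⁅w, X⁆ = t • X) :
    -- the corrected lift of J̃ maps h^⊥ to h^⊥
    (∀ Y : g, Ω Y X = 0 → Ω (J (Y - (Ω (J Y) X / Ω (J X) X) • X)) X = 0) ∧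
    -- J̃ squares to -id on the quotient h^⊥/h
    (∀ Y : g, Ω Y X = 0 →
      (fun W => J (W - (Ω (J W) X / Ω (J X) X) • X))
        ((fun W => J (W - (Ω (J W) X / Ω (J X) X) • X)) Y) + Y
        ∈ Submodule.span ℝ {X}) ∧
    -- the induced form Ω̃ on h^⊥/h is closed
    (∀ y z w : g, Ω y X = 0 → Ω z X = 0 → Ω w X = 0 →
      Ω ⁅y, z⁆ w + Ω ⁅z, w⁆ y + Ω ⁅w, y⁆ z = 0) ∧
    -- Ω̃ tames J̃
    (∀ Y : g, Ω Y X = 0 → Y ∉ Submodule.span ℝ {X} →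
      0 < Ω Y (J (Y - (Ω (J Y) X / Ω (J X) X) • X))) := by

  have hskew : ∀ x y : g, Ω x y = -Ω y x := by
    intro x y
    have h := halt (x + y)
    simp [map_add, halt x, halt y] at h
    linarith
  have hc : Ω (J X) X ≠ 0 := by
    have h1 : 0 < Ω X (J X) := htame X hX
    rw [hskew (J X) X]
    linarith
  refine ⟨?_, ?_, ?_, ?_⟩
  · intro Y hY
    simp only [map_sub, map_smul, smul_eq_mul, LinearMap.sub_apply, LinearMap.smul_apply]
    field_simp
    ring
  · intro Y hY
    have h2 : Ω (J (J (Y - (Ω (J Y) X / Ω (J X) X) • X))) X = 0 := by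
      rw [hJ]
      simp [map_sub, map_smul, hY, halt X]
    show J (J (Y - (Ω (J Y) X / Ω (J X) X) • X) -
        (Ω (J (J (Y - (Ω (J Y) X / Ω (J X) X) • X))) X / Ω (J X) X) • X) + Y ∈ _
    rw [h2, zero_div, zero_smul, sub_zero, hJ]
    rw [Submodule.mem_span_singleton]
    exact ⟨Ω (J Y) X / Ω (J X) X, by abel⟩
  · intro y z w _ _ _
    exact hclosed y z w
  · intro Y hY hYn
    set a : ℝ := Ω (J Y) X / Ω (J X) X with ha
    have hne : Y - a • X ≠ 0 := by
      intro h
      apply hYn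
      rw [Submodule.mem_span_singleton]
      exact ⟨a, by linear_combination (norm := module) -h⟩
    have key : Ω Y (J (Y - a • X)) = Ω (Y - a • X) (J (Y - a • X)) := by
      have hX0 : Ω X (J (Y - a • X)) = 0 := by
        simp only [map_sub, map_smul, smul_eq_mul]
        rw [hskew X (J Y), hskew X (J X)]
        have : a * Ω (J X) X = Ω (J Y) X := by rw [ha, div_mul_cancel₀ _ hc]
        linarith [this]
      simp only [map_sub, map_smul, smul_eq_mul, LinearMap.sub_apply, LinearMap.smul_apply] at hX0 ⊢
      rw [hskew X (J Y), hskew X (J X)] at hX0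
      rw [hskew X (J Y), hskew X (J X)]
      linear_combination a * hX0
    rw [key]
    exact htame _ hne
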